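/- Let F be a field of characteristic 2 and let t ∈ F be a nonsquare. Then the polynomial X² + X + γ(Y,t), where γ(Y,t) = Yt/(Y² + t), has no root in F(Y), and hence X² + X - γ(Y,t)² is irreducible over F(Y). -/

import Mathlib

open Polynomial

/-- Let `F` be a field of characteristic 2 and `t ∈ F` a nonsquare.
With `γ = Y t / (Y² + t) ∈ F(Y)`, the polynomial `X² + X + γ` has no root in `F(Y)`,
and hence `X² + X - γ²` is irreducible over `F(Y)`. -/
theorem stmt_4 {F : Type*} [Field F] (h2 : ringChar F = 2)
    (t : F) (ht : ∀ s : F, s ^ 2 ≠ t) :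
    (∀ x : RatFunc F,
        x ^ 2 + x + RatFunc.X * RatFunc.C t / (RatFunc.X ^ 2 + RatFunc.C t) ≠ 0) ∧
      Irreducible
        (X ^ 2 + X -
          C ((RatFunc.X * RatFunc.C t / (RatFunc.X ^ 2 + RatFunc.C t)) ^ 2) :
          Polynomial (RatFunc F)) := by
  have ht0 : t ≠ 0 := fun h => ht 0 (by simp [h])
  haveI : CharP F 2 := ringChar.of_eq h2
  haveI : CharP (RatFunc F) 2 := charP_of_injective_algebraMap' (A := RatFunc F) F 2
  have h2' : (2 : RatFunc F) = 0 := CharP.cast_eq_zero _ 2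
  have h2F : (2 : F) = 0 := CharP.cast_eq_zero _ 2
  set p : F[X] := X ^ 2 + C t with hp
  have hdeg : p.natDegree = 2 := by rw [hp]; compute_degree!
  have hpirr : Irreducible p := by
    rw [irreducible_iff_roots_eq_zero_of_degree_le_three (by omega) (by omega),
      Multiset.eq_zero_iff_forall_notMem]
    intro s hs
    rw [mem_roots, IsRoot, hp] at hs
    · apply ht s
      simp only [eval_add, eval_pow, eval_X, eval_C] at hs
      linear_combination hs - t * h2F
    · intro h; rw [h] at hdeg; simp at hdeg
  set φ := algebraMap F[X] (RatFunc F) with hφ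
  have hφinj : Function.Injective φ := IsFractionRing.injective _ _
  have hφp : φ p ≠ 0 := fun h => by
    apply hpirr.ne_zero; apply hφinj; rw [h, map_zero]
  have hγ : RatFunc.X * RatFunc.C t / (RatFunc.X ^ 2 + RatFunc.C t)
      = φ (X * C t) / φ p := by
    rw [hp, hφ, map_mul, map_add, map_pow, RatFunc.algebraMap_X, RatFunc.algebraMap_C]
  have part1 : ∀ x : RatFunc F,
      x ^ 2 + x + RatFunc.X * RatFunc.C t / (RatFunc.X ^ 2 + RatFunc.C t) ≠ 0 := by
    intro x hx
    rw [hγ] at hx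
    set a := x.num with ha
    set b := x.denom with hb
    have hbne : b ≠ 0 := x.denom_ne_zero
    have hφb : φ b ≠ 0 := fun h => hbne (hφinj (by rw [h, map_zero]))
    have hxab : x = φ a / φ b := (RatFunc.num_div_denom x).symm
    rw [hxab] at hx
    field_simp at hx
    simp only [← map_mul, ← map_pow, ← map_add] at hx
    have E0 := hφinj (hx.trans (by simp : φ (b ^ 2 * p) * 0 = φ 0))
    have E : a ^ 2 * p + a * b * p + X * C t * b ^ 2 = 0 := by
      apply mul_left_cancel₀ hbne
      linear_combination b * E0
    have hppr : Prime p := hpirr.prime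
    have hpb : p ∣ b := by
      have h1 : p ∣ X * C t * b ^ 2 := ⟨-(a ^ 2 + a * b), by linear_combination E⟩
      have hnd : ¬ p ∣ X * C t := by
        intro hdvd
        have hXCt : (X * C t : F[X]) ≠ 0 := by
          simp [ht0, X_ne_zero]
        have h3 := natDegree_le_of_dvd hdvd hXCt
        rw [hdeg] at h3
        have : (X * C t : F[X]).natDegree = 1 := by compute_degree!
        omega
      exact hppr.dvd_of_dvd_pow ((hppr.dvd_mul.mp h1).resolve_left hnd)
    have hpa : p ∣ a := by
      apply hppr.dvd_of_dvd_pow (n := 2)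
      obtain ⟨c, hc⟩ := hpb
      refine ⟨-(a * c + X * C t * c ^ 2), ?_⟩
      apply mul_left_cancel₀ hpirr.ne_zero
      rw [hc] at E
      linear_combination E
    exact hpirr.not_isUnit (x.isCoprime_num_denom.isUnit_of_dvd' hpa hpb)
  refine ⟨part1, ?_⟩
  set γ := RatFunc.X * RatFunc.C t / (RatFunc.X ^ 2 + RatFunc.C t) with hγdef
  set q : Polynomial (RatFunc F) := X ^ 2 + X - C (γ ^ 2) with hq
  have hqdeg : q.natDegree = 2 := by rw [hq]; compute_degree!
  rw [irreducible_iff_roots_eq_zero_of_degree_le_three (by omega) (by omega),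
    Multiset.eq_zero_iff_forall_notMem]
  intro r hr
  rw [mem_roots, IsRoot, hq] at hr
  · have hre : r ^ 2 + r - γ ^ 2 = 0 := by simpa using hr
    apply part1 (r - γ)
    show (r - γ) ^ 2 + (r - γ) + γ = 0
    linear_combination hre + (γ ^ 2 - r * γ) * h2'
  · intro h; rw [h] at hqdeg; simp at hqdeg
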